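/- arXiv:math/0411163 — 2 statements merged into one kernel-verified Lean document; each statement's English description precedes it below -/
import Mathlib

section
/- Define a sequence (a_k)_{k≥0} by a_0 = 1 and the recurrence a_k = Σ_{j=0}^{k-1} C(2k, 2j+1) · a_j · a_{k-j-1} for k ≥ 1 (where C(n,m) is the binomial coefficient). Then tan x = Σ_{k≥0} (a_k/(2k+1)!) x^{2k+1} as formal power series (equivalently, the a_k are the tangent/Zag numbers). -/
open Complex Finset

-- sum over odds
private lemma oddsum {M : Type*} [AddCommMonoid M] (F : ℕ → M) (h : ∀ j, F (2*j) = 0) :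
    ∀ k, ∑ i ∈ range (2*k+1), F i = ∑ j ∈ range k, F (2*j+1) := by
  intro k
  induction k with
  | zero => simpa using h 0
  | succ k ih =>
    have e : 2*(k+1)+1 = (2*k+1) + 1 + 1 := by ring
    rw [e, Finset.sum_range_succ, Finset.sum_range_succ, ih, Finset.sum_range_succ]
    have h2 : F (2*k+1+1) = 0 := by
      have := h (k+1); rwa [show 2*(k+1) = 2*k+1+1 by ring] at this
    rw [h2, add_zero]


private lemma pascal (A B : ℕ → ℂ) (n : ℕ) :
    ∑ i ∈ range (n+2), ((n+1).choose i : ℂ) * A i * B (n+1-i)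
      = ∑ i ∈ range (n+1), (n.choose i : ℂ) *
          (A (i+1) * B (n-i) + A i * B (n-i+1)) := by
  rw [Finset.sum_range_succ']
  have key : ∑ i ∈ range (n+1), (n.choose i : ℂ) * A i * B (n+1-i)
      = (∑ i ∈ range (n+1), (n.choose (i+1) : ℂ) * A (i+1) * B (n-i))
        + (n.choose 0 : ℂ) * A 0 * B (n+1) := by
    have : ∑ i ∈ range (n+2), (n.choose i : ℂ) * A i * B (n+1-i)
        = ∑ i ∈ range (n+1), (n.choose i : ℂ) * A i * B (n+1-i) := by
      rw [Finset.sum_range_succ, Nat.choose_succ_self]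
      simp
    rw [← this, Finset.sum_range_succ']
    congr 1
    refine Finset.sum_congr rfl fun i hi => ?_
    congr 2
    omega
  rw [show ((n:ℕ)+1-0) = n+1 from rfl]
  have h0 : ((n+1).choose 0 : ℂ) * A 0 * B (n+1) = (n.choose 0 : ℂ) * A 0 * B (n+1) := by
    simp
  rw [h0]
  have hterm : ∀ i ∈ range (n+1), ((n+1).choose (i+1) : ℂ) * A (i+1) * B (n+1-(i+1))
      = (n.choose i : ℂ) * (A (i+1) * B (n-i)) + (n.choose (i+1) : ℂ) * A (i+1) * B (n-i) := by
    intro i hi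
    rw [Nat.choose_succ_succ, Nat.succ_sub_succ]
    push_cast
    ring
  rw [Finset.sum_congr rfl hterm, Finset.sum_add_distrib]
  rw [add_assoc, ← key]
  have : ∀ i ∈ range (n+1), (n.choose i : ℂ) * (A (i+1) * B (n-i) + A i * B (n-i+1))
      = (n.choose i : ℂ) * (A (i+1) * B (n-i)) + (n.choose i : ℂ) * A i * B (n+1-i) := by
    intro i hi
    simp only [Finset.mem_range] at hi
    rw [show n - i + 1 = n + 1 - i by omega]
    ring
  rw [Finset.sum_congr rfl this, Finset.sum_add_distrib]


private lemma leibniz {U : Set ℂ} (hU : IsOpen U) {f g : ℂ → ℂ}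
    (hf : AnalyticOnNhd ℂ f U) (hg : AnalyticOnNhd ℂ g U) :
    ∀ n, ∀ z ∈ U, iteratedDeriv n (fun w => f w * g w) z
      = ∑ i ∈ range (n+1), (n.choose i : ℂ) * iteratedDeriv i f z * iteratedDeriv (n-i) g z := by
  have hf' : ∀ i, AnalyticOnNhd ℂ (iteratedDeriv i f) U := by
    intro i; rw [iteratedDeriv_eq_iterate]; exact hf.iterated_deriv i
  have hg' : ∀ i, AnalyticOnNhd ℂ (iteratedDeriv i g) U := by
    intro i; rw [iteratedDeriv_eq_iterate]; exact hg.iterated_deriv i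
  intro n
  induction n with
  | zero => intro z hz; simp
  | succ n ih =>
    intro z hz
    rw [iteratedDeriv_succ]
    have hEq : deriv (iteratedDeriv n fun w => f w * g w) z
        = deriv (fun w => ∑ i ∈ range (n+1),
            (n.choose i : ℂ) * iteratedDeriv i f w * iteratedDeriv (n-i) g w) z := by
      apply Filter.EventuallyEq.deriv_eq
      filter_upwards [hU.mem_nhds hz] with w hw
      exact ih w hw
    rw [hEq]
    have hdiff : ∀ i ∈ range (n+1), DifferentiableAt ℂ
        (fun w => (n.choose i : ℂ) * iteratedDeriv i f w * iteratedDeriv (n-i) g w) z := by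
      intro i _
      exact ((analyticAt_const.mul (hf' i z hz)).mul (hg' (n-i) z hz)).differentiableAt
    rw [deriv_fun_sum hdiff]
    have hterm : ∀ i ∈ range (n+1),
        deriv (fun w => (n.choose i : ℂ) * iteratedDeriv i f w * iteratedDeriv (n-i) g w) z
        = (n.choose i : ℂ) * (iteratedDeriv (i+1) f z * iteratedDeriv (n-i) g z
            + iteratedDeriv i f z * iteratedDeriv (n-i+1) g z) := by
      intro i _
      have e1 : (fun w => (n.choose i : ℂ) * iteratedDeriv i f w * iteratedDeriv (n-i) g w)
          = fun w => (n.choose i : ℂ) * (iteratedDeriv i f w * iteratedDeriv (n-i) g w) := by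
        funext w; ring
      rw [e1, deriv_const_mul _ (d := fun w => iteratedDeriv i f w * iteratedDeriv (n-i) g w) (((hf' i z hz).differentiableAt).mul
        ((hg' (n-i) z hz).differentiableAt)),
        deriv_fun_mul ((hf' i z hz).differentiableAt) ((hg' (n-i) z hz).differentiableAt),
        ← iteratedDeriv_succ, ← iteratedDeriv_succ]
    rw [Finset.sum_congr rfl hterm]
    exact (pascal (fun i => iteratedDeriv i f z) (fun i => iteratedDeriv i g z) n).symm


private lemma hUo : IsOpen {z : ℂ | Complex.cos z ≠ 0} :=
  isOpen_compl_singleton.preimage Complex.continuous_cos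

private lemma htan : AnalyticOnNhd ℂ Complex.tan {z : ℂ | Complex.cos z ≠ 0} := by
  apply DifferentiableOn.analyticOnNhd _ hUo
  exact fun z hz => (Complex.differentiableAt_tan.2 hz).differentiableWithinAt

private lemma hderiv : ∀ z ∈ {z : ℂ | Complex.cos z ≠ 0},
    deriv Complex.tan z = 1 + Complex.tan z * Complex.tan z := by
  intro z hz
  have hz' : Complex.cos z ≠ 0 := hz
  rw [Complex.deriv_tan, Complex.tan_eq_sin_div_cos]
  have h := Complex.sin_sq_add_cos_sq z
  field_simp
  linear_combination (-1:ℂ)*h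

private lemma cos_ne (z : ℂ) (hz : ‖z‖ < Real.pi / 2) : Complex.cos z ≠ 0 := by
  intro h
  obtain ⟨k, hk⟩ := Complex.cos_eq_zero_iff.1 h
  have e : z = ((((2*(k:ℝ)+1))*Real.pi/2 : ℝ) : ℂ) := by rw [hk]; push_cast; ring
  rw [e, Complex.norm_real, Real.norm_eq_abs, abs_div, abs_mul] at hz
  have h1 : (1:ℝ) ≤ |2*(k:ℝ)+1| := by
    have : (2*k+1 : ℤ) ≠ 0 := by omega
    have := Int.one_le_abs this
    calc (1:ℝ) ≤ |(2*k+1 : ℤ)| := by exact_mod_cast this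
    _ = |2*(k:ℝ)+1| := by push_cast; ring_nf
  have hpi : |Real.pi| = Real.pi := abs_of_pos Real.pi_pos
  have h2 : |(2:ℝ)| = 2 := by norm_num
  rw [hpi, h2] at hz
  nlinarith [Real.pi_pos]


private lemma d_rec (n : ℕ) :
    iteratedDeriv (n+1) Complex.tan 0 = (if n = 0 then 1 else 0) +
      ∑ i ∈ range (n+1), (n.choose i : ℂ) *
        iteratedDeriv i Complex.tan 0 * iteratedDeriv (n-i) Complex.tan 0 := by
  have h0 : (0:ℂ) ∈ {z : ℂ | Complex.cos z ≠ 0} := by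
    simp [Set.mem_setOf_eq, Complex.cos_zero]
  match n with
  | 0 =>
    simp only [if_pos rfl, zero_add, iteratedDeriv_one, Finset.range_one, Finset.sum_singleton,
      Nat.choose_self, Nat.cast_one, one_mul, Nat.sub_zero]
    have := hderiv 0 h0
    rw [this, iteratedDeriv_zero]
    simp
  | (m+1) =>
    rw [if_neg (Nat.succ_ne_zero m), zero_add]
    rw [iteratedDeriv_succ']
    have hEq : Set.EqOn (deriv Complex.tan)
        (fun w => 1 + Complex.tan w * Complex.tan w) {z : ℂ | Complex.cos z ≠ 0} :=
      fun w hw => hderiv w hw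
    have := (hEq.iteratedDeriv_of_isOpen hUo (m+1)) h0
    rw [this]
    have hconst : iteratedDeriv (m+1) (fun w => 1 + Complex.tan w * Complex.tan w) 0
        = iteratedDeriv (m+1) (fun w => Complex.tan w * Complex.tan w) 0 := by
      rw [iteratedDeriv_succ', iteratedDeriv_succ']
      congr 1
      exact deriv_const_add' 1
    rw [hconst]
    exact leibniz hUo htan htan (m+1) 0 h0

private lemma d_even (k : ℕ) : iteratedDeriv (2*k) Complex.tan 0 = 0 := by
  have hodd : Complex.tan = fun z => -(Complex.tan (-z)) := by
    funext z; rw [Complex.tan_neg, neg_neg]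
  have h2 : ((-1 : ℂ)) ^ (2*k) = 1 := by
    rw [pow_mul]; norm_num
  have key : iteratedDeriv (2*k) Complex.tan 0 = -(iteratedDeriv (2*k) Complex.tan 0) := by
    calc iteratedDeriv (2*k) Complex.tan 0
        = iteratedDeriv (2*k) (fun z => -(Complex.tan (-z))) 0 := by rw [← hodd]
      _ = -(iteratedDeriv (2*k) (fun z => Complex.tan (-z)) 0) :=
          iteratedDeriv_neg (2*k) _ 0
      _ = -(((-1 : ℂ)) ^ (2*k) • iteratedDeriv (2*k) Complex.tan (-0)) := by
          rw [iteratedDeriv_comp_neg]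
      _ = -(iteratedDeriv (2*k) Complex.tan 0) := by rw [neg_zero, h2, one_smul]
  have h3 : (2:ℂ) * iteratedDeriv (2*k) Complex.tan 0 = 0 := by linear_combination key
  exact (mul_eq_zero.mp h3).resolve_left two_ne_zero


/-- Let `a_0 = 1` and `a_k = Σ_{j=0}^{k-1} C(2k, 2j+1) a_j a_{k-j-1}` for `k ≥ 1`.
Then `tan x = Σ_{k≥0} (a_k/(2k+1)!) x^{2k+1}` (valid for `|x| < π/2`); i.e. the
`a_k` are the tangent (Zag) numbers. -/
theorem tan_series_zag (a : ℕ → ℚ) (h0 : a 0 = 1)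
    (hrec : ∀ k, 1 ≤ k →
      a k = ∑ j ∈ Finset.range k,
        (Nat.choose (2 * k) (2 * j + 1) : ℚ) * a j * a (k - j - 1)) :
    ∀ x : ℝ, |x| < Real.pi / 2 →
      HasSum (fun k : ℕ => ((a k : ℝ) / (Nat.factorial (2 * k + 1) : ℝ)) * x ^ (2 * k + 1))
        (Real.tan x) := by
  have hd0 : iteratedDeriv 0 Complex.tan 0 = 0 := by
    simp [iteratedDeriv_zero, Complex.tan_zero]
  have hdeven : ∀ j, iteratedDeriv (2*j) Complex.tan 0 = 0 := fun j => d_even j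
  have hdodd : ∀ k, iteratedDeriv (2*k+1) Complex.tan 0 = (a k : ℂ) := by
    intro k
    induction k using Nat.strong_induction_on with
    | _ k ih =>
      rcases Nat.eq_zero_or_pos k with rfl | hk
      · have h1 := d_rec 0
        rw [if_pos rfl] at h1
        show iteratedDeriv (0+1) Complex.tan 0 = (a 0 : ℂ)
        rw [h1, h0]
        simp [hd0]
      · have hrec' := hrec k hk
        have h1 := d_rec (2*k)
        rw [if_neg (by omega : ¬ 2*k = 0), zero_add] at h1
        have hF : ∀ j, ((2*k).choose (2*j) : ℂ) * iteratedDeriv (2*j) Complex.tan 0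
            * iteratedDeriv (2*k - 2*j) Complex.tan 0 = 0 := by
          intro j; rw [hdeven j]; ring
        have h2 := oddsum (fun i => ((2*k).choose i : ℂ) * iteratedDeriv i Complex.tan 0
          * iteratedDeriv (2*k - i) Complex.tan 0) hF k
        have h3 : ∀ j ∈ Finset.range k,
            ((2*k).choose (2*j+1) : ℂ) * iteratedDeriv (2*j+1) Complex.tan 0
              * iteratedDeriv (2*k - (2*j+1)) Complex.tan 0
            = ((2*k).choose (2*j+1) : ℂ) * (a j : ℂ) * (a (k-j-1) : ℂ) := by
          intro j hj
          simp only [Finset.mem_range] at hj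
          rw [show 2*k - (2*j+1) = 2*(k-j-1)+1 by omega, ih j hj,
            ih (k-j-1) (by omega)]
        rw [h1, h2, Finset.sum_congr rfl h3, hrec']
        push_cast
        rfl
  intro x hx
  set r : ℝ := (|x| + Real.pi/2)/2 with hr
  have hx0 : (0:ℝ) ≤ |x| := abs_nonneg x
  have hrpos : 0 < r := by positivity
  have hxr : |x| < r := by rw [hr]; linarith
  have hrlt : r < Real.pi/2 := by rw [hr]; linarith
  set R : NNReal := ⟨r, hrpos.le⟩ with hR
  have hRpos : 0 < R := by exact_mod_cast hrpos
  have hdiff : DifferentiableOn ℂ Complex.tan (Metric.closedBall (0:ℂ) R) := by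
    intro z hz
    have hz' : ‖z‖ ≤ r := by
      simpa [Complex.dist_eq] using (Metric.mem_closedBall.mp hz : dist z 0 ≤ r)
    exact (Complex.differentiableAt_tan.2
      (cos_ne z (lt_of_le_of_lt hz' hrlt))).differentiableWithinAt
  have hps := hdiff.hasFPowerSeriesOnBall hRpos
  have hmem : (x : ℂ) ∈ Metric.eball (0:ℂ) R := by
    rw [Metric.mem_eball, edist_zero_right]
    rw [show (‖(x:ℂ)‖ₑ < (R : ENNReal)) = (‖(x:ℂ)‖₊ < R) from
      propext ENNReal.coe_lt_coe]
    rw [← NNReal.coe_lt_coe, coe_nnnorm, Complex.norm_real, Real.norm_eq_abs]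
    exact hxr
  have hsum := hps.hasSum_iteratedFDeriv hmem
  simp only [zero_add] at hsum
  have hterm : ∀ n : ℕ, ((n.factorial : ℂ))⁻¹ • iteratedFDeriv ℂ n Complex.tan 0 (fun _ => (x:ℂ))
      = ((n.factorial : ℂ))⁻¹ * ((x:ℂ)^n * iteratedDeriv n Complex.tan 0) := by
    intro n
    rw [iteratedFDeriv_apply_eq_iteratedDeriv_mul_prod]
    simp [smul_eq_mul]
  rw [show (fun n => ((n.factorial : ℂ))⁻¹ • iteratedFDeriv ℂ n Complex.tan 0 (fun _ => (x:ℂ)))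
      = fun n => ((n.factorial : ℂ))⁻¹ * ((x:ℂ)^n * iteratedDeriv n Complex.tan 0)
      from funext hterm] at hsum
  have hinj : Function.Injective (fun k : ℕ => 2*k+1) := by
    intro i j h; simp only at h; omega
  have hsupp : ∀ n, n ∉ Set.range (fun k : ℕ => 2*k+1) →
      ((n.factorial : ℂ))⁻¹ * ((x:ℂ)^n * iteratedDeriv n Complex.tan 0) = 0 := by
    intro n hn
    have : ∃ m, n = 2*m := by
      rcases Nat.even_or_odd n with ⟨m, hm⟩ | ⟨m, hm⟩
      · exact ⟨m, by omega⟩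
      · exact absurd ⟨m, show 2*m+1 = n by omega⟩ hn
    obtain ⟨m, rfl⟩ := this
    rw [hdeven m]; ring
  have hsum2 := (Function.Injective.hasSum_iff hinj hsupp).2 hsum
  have hterm2 : ∀ k : ℕ,
      ((fun n => ((n.factorial : ℂ))⁻¹ * ((x:ℂ)^n * iteratedDeriv n Complex.tan 0))
        ∘ (fun k : ℕ => 2*k+1)) k
      = ((((a k : ℝ) / (Nat.factorial (2*k+1) : ℝ)) * x ^ (2*k+1) : ℝ) : ℂ) := by
    intro k
    simp only [Function.comp_apply]
    rw [hdodd k]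
    push_cast
    ring
  rw [show ((fun n => ((n.factorial : ℂ))⁻¹ * ((x:ℂ)^n * iteratedDeriv n Complex.tan 0))
        ∘ (fun k : ℕ => 2*k+1))
      = fun k => ((((a k : ℝ) / (Nat.factorial (2*k+1) : ℝ)) * x ^ (2*k+1) : ℝ) : ℂ)
      from funext hterm2] at hsum2
  rw [show Complex.tan (x : ℂ) = ((Real.tan x : ℝ) : ℂ) from (Complex.ofReal_tan x).symm] at hsum2
  exact Complex.hasSum_ofReal.1 hsum2
end

section
/- For the vertex-relabeling sign-count c_Γ = Σ_{σ∈S_V} (-1)^{#edges inverted by σ}: if Γ is the disjoint union of pairwise non-isomorphic graphs Γ_1,...,Γ_n with V_1,...,V_n vertices (V = ΣV_i), then c_Γ = (V!/(V_1!···V_n!)) · c_{Γ_1} ··· c_{Γ_n}. -/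
/-- The sign-count `c_Γ` of a labeled graph: the vertex set is a linearly ordered
finite type `α`, edges are recorded as ordered pairs (oriented from lower to
higher endpoint), and
`c_Γ = Σ_{σ ∈ S_V} (-1)^{#{edges {i,j}, i<j, with σ(i) > σ(j)}}`. -/
noncomputable def cGamma {α ι : Type*} [Fintype α] [LinearOrder α] [Fintype ι]
    (s : ι → α × α) : ℤ :=
  ∑ σ : Equiv.Perm α,
    (-1 : ℤ) ^ (Finset.univ.filter fun e => σ (s e).2 < σ (s e).1).card

/-- Isomorphism of (multi)graphs: a bijection of vertices and a bijection of edges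
matching each edge's unordered pair of endpoints. -/
def GraphIso {α β ι κ : Type*} [DecidableEq β] (s : ι → α × α) (t : κ → β × β) : Prop :=
  ∃ (σ : α ≃ β) (τ : ι ≃ κ), ∀ e,
    ({σ (s e).1, σ (s e).2} : Finset β) = {(t (τ e)).1, (t (τ e)).2}

/-- The disjoint union of labeled graphs `Γ_1, ..., Γ_n`, with vertex set the
lexicographically ordered sigma type (each `Γ_i` placed on its own block of
vertices, order-preservingly). -/
def disjUnion {n : ℕ} {V E : Fin n → ℕ} (s : ∀ i, Fin (E i) → Fin (V i) × Fin (V i)) :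
    (Σ i, Fin (E i)) → (Σₗ i, Fin (V i)) × (Σₗ i, Fin (V i)) := fun e =>
  (toLex ⟨e.1, (s e.1 e.2).1⟩, toLex ⟨e.1, (s e.1 e.2).2⟩)

/- ----------------- auxiliary material ----------------- -/

section Aux

variable {n : ℕ} {V : Fin n → ℕ}

/-- The block-diagonal permutation of the lex sigma type. -/
def blockPerm (π : ∀ i, Equiv.Perm (Fin (V i))) : Equiv.Perm (Σₗ i, Fin (V i)) :=
  ((toLex (α := Σ i, Fin (V i))).symm.trans (Equiv.sigmaCongrRight π)).trans
    (toLex (α := Σ i, Fin (V i)))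

@[simp] lemma blockPerm_apply (π : ∀ i, Equiv.Perm (Fin (V i))) (i : Fin n) (x : Fin (V i)) :
    blockPerm π (toLex ⟨i, x⟩) = toLex ⟨i, π i x⟩ := rfl

lemma toLex_mk_lt_toLex_mk {i : Fin n} {a b : Fin (V i)} :
    (toLex ⟨i, a⟩ : Σₗ i, Fin (V i)) < toLex ⟨i, b⟩ ↔ a < b := by
  rw [Sigma.Lex.lt_def]
  constructor
  · rintro (h | ⟨h, hab⟩)
    · exact absurd h (lt_irrefl i)
    · exact hab
  · intro h
    exact Or.inr ⟨rfl, h⟩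

lemma toLex_mk_inj {i : Fin n} {a b : Fin (V i)} :
    (toLex ⟨i, a⟩ : Σₗ i, Fin (V i)) = toLex ⟨i, b⟩ ↔ a = b := by
  constructor
  · intro h
    exact sigma_mk_injective (β := fun j : Fin n => Fin (V j)) (congrArg (ofLex (α := Σ i, Fin (V i))) h)
  · rintro rfl; rfl

/-- The set of permutations that are increasing on every block. -/
def BlockMono : Type _ :=
  {m : Equiv.Perm (Σₗ i, Fin (V i)) //
    ∀ i, StrictMono fun x : Fin (V i) => m (toLex ⟨i, x⟩)}

open Classical in
noncomputable instance : Fintype (BlockMono (V := V)) :=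
  Subtype.fintype _

/-- The decomposition map. -/
def decomp (p : BlockMono (V := V) × ∀ i, Equiv.Perm (Fin (V i))) :
    Equiv.Perm (Σₗ i, Fin (V i)) :=
  p.1.1 * blockPerm p.2

lemma decomp_apply (p : BlockMono (V := V) × ∀ i, Equiv.Perm (Fin (V i)))
    (i : Fin n) (x : Fin (V i)) :
    decomp p (toLex ⟨i, x⟩) = p.1.1 (toLex ⟨i, p.2 i x⟩) := rfl

lemma decomp_bijective : Function.Bijective (decomp (V := V)) := by
  classical
  constructor
  · rintro ⟨⟨m, hm⟩, π⟩ ⟨⟨m', hm'⟩, π'⟩ h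
    have hpt : ∀ (i : Fin n) (x : Fin (V i)),
        m (toLex ⟨i, π i x⟩) = m' (toLex ⟨i, π' i x⟩) := by
      intro i x
      exact DFunLike.congr_fun h (toLex ⟨i, x⟩)
    -- the images of each block agree
    have hmm' : ∀ (i : Fin n) (x : Fin (V i)), m (toLex ⟨i, x⟩) = m' (toLex ⟨i, x⟩) := by
      intro i
      set t : Finset (Σₗ i, Fin (V i)) :=
        Finset.image (fun x : Fin (V i) => m (toLex ⟨i, x⟩)) Finset.univ with ht
      have hinj : Function.Injective fun x : Fin (V i) => m (toLex ⟨i, x⟩) := by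
        intro a b hab
        exact sigma_mk_injective (β := fun j : Fin n => Fin (V j)) (congrArg (ofLex (α := Σ i, Fin (V i))) (m.injective hab))
      have hinj' : Function.Injective fun x : Fin (V i) => m' (toLex ⟨i, x⟩) := by
        intro a b hab
        exact sigma_mk_injective (β := fun j : Fin n => Fin (V j)) (congrArg (ofLex (α := Σ i, Fin (V i))) (m'.injective hab))
      have hcard : t.card = V i := by
        rw [ht, Finset.card_image_of_injective _ hinj, Finset.card_univ, Fintype.card_fin]
      have hmem : ∀ x, m (toLex ⟨i, x⟩) ∈ t := fun x =>
        Finset.mem_image_of_mem _ (Finset.mem_univ x)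
      have hmem' : ∀ x, m' (toLex ⟨i, x⟩) ∈ t := by
        intro x
        rw [ht]
        refine Finset.mem_image.2 ⟨π i ((π' i)⁻¹ x), Finset.mem_univ _, ?_⟩
        rw [hpt i ((π' i)⁻¹ x)]
        simp
      have e1 := Finset.orderEmbOfFin_unique hcard hmem (hm i)
      have e2 := Finset.orderEmbOfFin_unique hcard hmem' (hm' i)
      intro x
      rw [congrFun e1 x, congrFun e2 x]
    have hmeq : m = m' := by
      apply Equiv.ext
      intro a
      exact hmm' (ofLex a).1 (ofLex a).2
    subst hmeq
    have hbp : blockPerm π = blockPerm π' := mul_left_cancel h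
    have hπ : π = π' := by
      funext i
      apply Equiv.ext
      intro x
      have := DFunLike.congr_fun hbp (toLex ⟨i, x⟩)
      simpa [toLex_mk_inj] using this
    subst hπ
    rfl
  · intro σ
    set f : ∀ i, Fin (V i) → (Σₗ i, Fin (V i)) := fun i x => σ (toLex ⟨i, x⟩) with hf
    set π : ∀ i, Equiv.Perm (Fin (V i)) := fun i => (Tuple.sort (f i))⁻¹ with hπ
    have hmono : ∀ i, StrictMono fun x : Fin (V i) =>
        (σ * blockPerm fun i => (π i)⁻¹) (toLex ⟨i, x⟩) := by
      intro i
      have heq : (fun x : Fin (V i) =>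
          (σ * blockPerm fun i => (π i)⁻¹) (toLex ⟨i, x⟩)) =
            f i ∘ Tuple.sort (f i) := by
        funext x
        simp [hπ, Equiv.Perm.mul_apply, hf]
      rw [heq]
      apply (Tuple.monotone_sort (f i)).strictMono_of_injective
      intro a b hab
      apply (Tuple.sort (f i)).injective
      exact sigma_mk_injective (β := fun j : Fin n => Fin (V j)) (congrArg (ofLex (α := Σ i, Fin (V i))) (σ.injective hab))
    refine ⟨⟨⟨σ * blockPerm fun i => (π i)⁻¹, hmono⟩, π⟩, ?_⟩
    show (σ * blockPerm fun i => (π i)⁻¹) * blockPerm π = σ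
    apply Equiv.ext
    intro a
    show σ ((blockPerm fun i => (π i)⁻¹) (blockPerm π a)) = σ a
    congr 1
    show toLex ⟨(ofLex a).1, (π (ofLex a).1)⁻¹ (π (ofLex a).1 (ofLex a).2)⟩ = a
    simp

lemma neg_one_pow_filter_card {ι : Type*} [Fintype ι] (p : ι → Prop) [DecidablePred p] :
    (-1 : ℤ) ^ (Finset.univ.filter p).card = ∏ e, if p e then (-1 : ℤ) else 1 := by
  rw [Finset.prod_ite, Finset.prod_const, Finset.prod_const_one, mul_one]

lemma cGamma_eq_sum_prod {α ι : Type*} [Fintype α] [LinearOrder α] [Fintype ι]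
    (s : ι → α × α) :
    cGamma s = ∑ σ : Equiv.Perm α, ∏ e, if σ (s e).2 < σ (s e).1 then (-1 : ℤ) else 1 := by
  unfold cGamma
  exact Finset.sum_congr rfl fun σ _ => neg_one_pow_filter_card _

end Aux

set_option maxHeartbeats 1000000

/-- If `Γ` is the disjoint union of pairwise non-isomorphic graphs `Γ_1,...,Γ_n`
with `V_1,...,V_n` vertices, then
`c_Γ = (V!/(V_1!···V_n!)) · c_{Γ_1} ··· c_{Γ_n}` (with `V = Σ V_i`). -/
theorem cGamma_disjUnion {n : ℕ} {V E : Fin n → ℕ}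
    (s : ∀ i, Fin (E i) → Fin (V i) × Fin (V i))
    (hor : ∀ i e, (s i e).1 < (s i e).2)
    (hiso : ∀ i j, i ≠ j → ¬ GraphIso (s i) (s j)) :
    cGamma (disjUnion s) =
      (Nat.multinomial Finset.univ V : ℤ) * ∏ i, cGamma (s i) := by
  classical
  -- the cardinality of `BlockMono`
  have hcardM : Fintype.card (BlockMono (V := V)) = Nat.multinomial Finset.univ V := by
    have h1 : Fintype.card (BlockMono (V := V) × ∀ i, Equiv.Perm (Fin (V i))) =
        Fintype.card (Equiv.Perm (Σₗ i, Fin (V i))) :=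
      Fintype.card_of_bijective decomp_bijective
    have h2 : Fintype.card (Σₗ i, Fin (V i)) = ∑ i, V i := by
      rw [Fintype.card_congr (toLex (α := Σ i, Fin (V i))).symm]
      simp
    rw [Fintype.card_prod, Fintype.card_pi, Fintype.card_perm, h2] at h1
    simp only [Fintype.card_perm, Fintype.card_fin] at h1
    have h3 := Nat.multinomial_spec (Finset.univ : Finset (Fin n)) V
    have hpos : 0 < ∏ i, Nat.factorial (V i) :=
      Finset.prod_pos fun i _ => Nat.factorial_pos _
    have h4 : Fintype.card (BlockMono (V := V)) * ∏ i, Nat.factorial (V i) =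
        Nat.multinomial Finset.univ V * ∏ i, Nat.factorial (V i) := by
      rw [h1, ← h3, mul_comm]
    exact Nat.eq_of_mul_eq_mul_right hpos h4
  have bridge : cGamma (disjUnion s) =
      ∑ σ : Equiv.Perm (Σₗ i, Fin (V i)), ∏ e : Σ i, Fin (E i),
        if σ ((disjUnion s e).2) < σ ((disjUnion s e).1) then (-1 : ℤ) else 1 := by
    refine (cGamma_eq_sum_prod _).trans ?_
    refine Finset.sum_equiv (Equiv.refl _) (fun x => by simp) (fun σ _ => ?_)
    refine Finset.prod_equiv (Equiv.refl _) (fun x => by simp) (fun e _ => ?_)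
    exact if_congr Iff.rfl rfl rfl
  have key : ∀ p : BlockMono (V := V) × ∀ i, Equiv.Perm (Fin (V i)),
      (∏ e : Σ i, Fin (E i),
        if decomp p ((disjUnion s e).2) < decomp p ((disjUnion s e).1) then (-1 : ℤ) else 1)
      = ∏ i, ∏ e : Fin (E i),
          if p.2 i (s i e).2 < p.2 i (s i e).1 then (-1 : ℤ) else 1 := by
    intro p
    rw [← Finset.univ_sigma_univ, Finset.prod_sigma]
    refine Finset.prod_congr rfl fun i _ => Finset.prod_congr rfl fun e _ => ?_
    congr 1
    show (decomp p (toLex ⟨i, (s i e).2⟩) < decomp p (toLex ⟨i, (s i e).1⟩)) =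
      (p.2 i (s i e).2 < p.2 i (s i e).1)
    rw [decomp_apply, decomp_apply]
    rw [eq_iff_iff]
    exact (p.1.2 i).lt_iff_lt
  have step1 :
    (∑ σ : Equiv.Perm (Σₗ i, Fin (V i)), ∏ e : Σ i, Fin (E i),
        if σ ((disjUnion s e).2) < σ ((disjUnion s e).1) then (-1 : ℤ) else 1)
      = ∑ p : BlockMono (V := V) × ∀ i, Equiv.Perm (Fin (V i)),
          ∏ e : Σ i, Fin (E i),
            if decomp p ((disjUnion s e).2) < decomp p ((disjUnion s e).1)
              then (-1 : ℤ) else 1 :=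
    (Function.Bijective.sum_comp decomp_bijective _).symm
  have step2 :
    (∑ p : BlockMono (V := V) × ∀ i, Equiv.Perm (Fin (V i)),
          ∏ e : Σ i, Fin (E i),
            if decomp p ((disjUnion s e).2) < decomp p ((disjUnion s e).1)
              then (-1 : ℤ) else 1)
      = ∑ p : BlockMono (V := V) × ∀ i, Equiv.Perm (Fin (V i)),
          ∏ i, ∏ e : Fin (E i),
            if p.2 i (s i e).2 < p.2 i (s i e).1 then (-1 : ℤ) else 1 :=
    Finset.sum_congr rfl fun p _ => key p
  have step3 :
    (∑ p : BlockMono (V := V) × ∀ i, Equiv.Perm (Fin (V i)),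
          ∏ i, ∏ e : Fin (E i),
            if p.2 i (s i e).2 < p.2 i (s i e).1 then (-1 : ℤ) else 1)
    = ∑ _m : BlockMono (V := V), ∑ π : ∀ i, Equiv.Perm (Fin (V i)),
          ∏ i, ∏ e : Fin (E i),
            if π i (s i e).2 < π i (s i e).1 then (-1 : ℤ) else 1 := by
    rw [Fintype.sum_prod_type]
  have step4 :
    (∑ _m : BlockMono (V := V), ∑ π : ∀ i, Equiv.Perm (Fin (V i)),
          ∏ i, ∏ e : Fin (E i),
            if π i (s i e).2 < π i (s i e).1 then (-1 : ℤ) else 1)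
    = (Fintype.card (BlockMono (V := V)) : ℤ) *
          ∑ π : ∀ i, Equiv.Perm (Fin (V i)),
            ∏ i, ∏ e : Fin (E i),
              if π i (s i e).2 < π i (s i e).1 then (-1 : ℤ) else 1 := by
    rw [Finset.sum_const, Finset.card_univ, nsmul_eq_mul]
  have step5 :
    (∑ π : ∀ i, Equiv.Perm (Fin (V i)),
            ∏ i, ∏ e : Fin (E i),
              if π i (s i e).2 < π i (s i e).1 then (-1 : ℤ) else 1)
    = ∏ i, cGamma (s i) := by
    have h : (∏ i, ∑ ρ : Equiv.Perm (Fin (V i)),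
          ∏ e : Fin (E i), if ρ (s i e).2 < ρ (s i e).1 then (-1 : ℤ) else 1)
        = ∑ π : ∀ i, Equiv.Perm (Fin (V i)),
            ∏ i, ∏ e : Fin (E i),
              if π i (s i e).2 < π i (s i e).1 then (-1 : ℤ) else 1 :=
      Fintype.prod_sum _
    rw [← h]
    refine Finset.prod_congr rfl fun i _ => ?_
    refine Eq.trans ?_ (cGamma_eq_sum_prod _).symm
    refine Finset.sum_equiv (Equiv.refl _) (fun x => by simp) (fun ρ _ => ?_)
    refine Finset.prod_equiv (Equiv.refl _) (fun x => by simp) (fun e _ => ?_)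
    exact if_congr Iff.rfl rfl rfl
  rw [bridge, step1, step2, step3, step4, step5, hcardM]
end
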